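/- Let F̂ be a topologically finitely generated profinite group and α̂: F̂ → F̂ a continuous endomorphism. Then the restriction of α̂ to P = ⋂_{n∈ℕ} α̂ⁿ(F̂) is a surjective (hence bijective) continuous endomorphism of P. -/

import Mathlib

/-- Two group homomorphisms with open kernels that agree on a topological generating set
are equal. -/
private lemma homs_eq_of_eq_on_gens {G : Type*} [Group G] [TopologicalSpace G]
    [IsTopologicalGroup G] (S : Finset G)
    (hS : closure ((Subgroup.closure (S : Set G) : Subgroup G) : Set G) = Set.univ)
    {M : Type*} [Group M] (f g : G →* M) (hf : IsOpen (f.ker : Set G))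
    (hg : IsOpen (g.ker : Set G)) (h : ∀ s ∈ S, f s = g s) : f = g := by
  let E : Subgroup G :=
    { carrier := {x | f x = g x}
      one_mem' := by simp
      mul_mem' := by
        intro a b ha hb
        simp only [Set.mem_setOf_eq, map_mul] at *
        rw [ha, hb]
      inv_mem' := by
        intro a ha
        simp only [Set.mem_setOf_eq, map_inv] at *
        rw [ha] }
  have hle : f.ker ⊓ g.ker ≤ E := by
    intro x hx
    obtain ⟨hx1, hx2⟩ := Subgroup.mem_inf.1 hx
    show f x = g x
    rw [MonoidHom.mem_ker.1 hx1, MonoidHom.mem_ker.1 hx2]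
  have hEopen : IsOpen (E : Set G) := by
    refine Subgroup.isOpen_mono hle ?_
    rw [Subgroup.coe_inf]
    exact hf.inter hg
  have hEclosed : IsClosed (E : Set G) := Subgroup.isClosed_of_isOpen E hEopen
  have hSE : Subgroup.closure (S : Set G) ≤ E := by
    rw [Subgroup.closure_le]
    intro s hs
    exact h s hs
  have hall : ∀ x : G, f x = g x := by
    intro x
    have : x ∈ closure ((Subgroup.closure (S : Set G) : Subgroup G) : Set G) := by
      rw [hS]; trivial
    have : x ∈ closure (E : Set G) := closure_mono hSE this
    rwa [hEclosed.closure_eq] at this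
  ext x
  exact hall x

/-- In a topologically finitely generated topological group, there are only finitely many
group homomorphisms with open kernel to a fixed finite group. -/
private lemma finite_openKer_homs {G : Type*} [Group G] [TopologicalSpace G]
    [IsTopologicalGroup G] (S : Finset G)
    (hS : closure ((Subgroup.closure (S : Set G) : Subgroup G) : Set G) = Set.univ)
    {M : Type*} [Group M] [Finite M] :
    {f : G →* M | IsOpen (f.ker : Set G)}.Finite := by
  rw [← Set.finite_coe_iff]
  refine Finite.of_injective (fun f => (fun s : S => f.1 s)) ?_
  intro f g hfg
  ext1
  refine homs_eq_of_eq_on_gens S hS f.1 g.1 f.2 g.2 ?_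
  intro s hs
  exact congrFun hfg ⟨s, hs⟩

/-- In a finite group, an element of the eventual image of an endomorphism which is mapped
to `1` must be `1`. -/
private lemma eq_one_of_mem_eventualImage_finite {Q : Type*} [Group Q] [Finite Q]
    (β : Q →* Q) {q : Q} (hq : q ∈ ⋂ n : ℕ, Set.range (⇑β)^[n]) (h1 : β q = 1) : q = 1 := by
  -- choose `m` minimizing the cardinality of `range β^[m]`
  have hne : (Set.range fun n : ℕ => (Set.range (⇑β)^[n]).ncard).Nonempty := ⟨_, 0, rfl⟩
  obtain ⟨m, hm⟩ := Nat.sInf_mem hne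
  have hmin : ∀ k : ℕ, (Set.range (⇑β)^[m]).ncard ≤ (Set.range (⇑β)^[k]).ncard := by
    intro k
    exact le_trans (le_of_eq hm) (Nat.sInf_le ⟨k, rfl⟩)
  have hsub : Set.range (⇑β)^[m + 1] ⊆ Set.range (⇑β)^[m] := by
    rintro x ⟨y, rfl⟩
    exact ⟨β y, (Function.iterate_succ_apply (⇑β) m y).symm⟩
  have hEq : Set.range (⇑β)^[m + 1] = Set.range (⇑β)^[m] :=
    Set.eq_of_subset_of_ncard_le hsub (hmin (m + 1)) (Set.toFinite _)
  set E := Set.range (⇑β)^[m] with hE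
  have hmaps : Set.MapsTo ⇑β E E := by
    rintro x ⟨y, rfl⟩
    rw [← hEq]
    exact ⟨y, Function.iterate_succ_apply' (⇑β) m y⟩
  have hsurj : Set.SurjOn ⇑β E E := by
    intro x hx
    rw [← hEq] at hx
    obtain ⟨y, rfl⟩ := hx
    refine ⟨(⇑β)^[m] y, ⟨y, rfl⟩, ?_⟩
    exact (Function.iterate_succ_apply' (⇑β) m y).symm
  have hbij : Set.BijOn ⇑β E E := ((Set.toFinite E).surjOn_iff_bijOn_of_mapsTo hmaps).1 hsurj
  have hqE : q ∈ E := Set.mem_iInter.1 hq m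
  have h1E : (1 : Q) ∈ E := ⟨1, iterate_map_one β m⟩
  have : β q = β 1 := by rw [h1, map_one]
  exact hbij.injOn hqE h1E this

/-- Key step: an element of the eventual image killed by `α` lies in every open normal
subgroup. -/
private lemma mem_of_openNormal {G : Type*} [Group G] [TopologicalSpace G]
    [IsTopologicalGroup G] [CompactSpace G] (S : Finset G)
    (hS : closure ((Subgroup.closure (S : Set G) : Subgroup G) : Set G) = Set.univ)
    (α : G →* G) (hα : Continuous α) (N : Subgroup G) [hNn : N.Normal]
    (hN : IsOpen (N : Set G)) {z : G}
    (hz : z ∈ ⋂ n : ℕ, Set.range (⇑α)^[n]) (hz1 : α z = 1) : z ∈ N := by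
  haveI : Finite (G ⧸ N) := N.quotient_finite_of_isOpen hN
  set 𝓕 : Set (G →* G ⧸ N) := {f : G →* G ⧸ N | IsOpen (f.ker : Set G)} with h𝓕
  have hfin : 𝓕.Finite := finite_openKer_homs S hS
  set V : Subgroup G := ⨅ f ∈ 𝓕, f.ker with hV
  have hmemV : ∀ x : G, x ∈ V ↔ ∀ f ∈ 𝓕, x ∈ f.ker := by
    intro x
    simp [hV, Subgroup.mem_iInf]
  have hmk𝓕 : QuotientGroup.mk' N ∈ 𝓕 := by
    show IsOpen ((QuotientGroup.mk' N).ker : Set G)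
    rwa [QuotientGroup.ker_mk']
  have hVN : V ≤ N := by
    intro x hx
    have := (hmemV x).1 hx (QuotientGroup.mk' N) hmk𝓕
    rwa [QuotientGroup.ker_mk'] at this
  have hVopen : IsOpen (V : Set G) := by
    have : (V : Set G) = ⋂ f ∈ 𝓕, (f.ker : Set G) := by
      simp [hV, Subgroup.coe_iInf]
    rw [this]
    exact hfin.isOpen_biInter fun f hf => hf
  haveI hVnormal : V.Normal := by
    constructor
    intro n hn g
    rw [hmemV] at hn ⊢
    intro f hf
    exact (MonoidHom.normal_ker f).conj_mem n (hn f hf) g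
  have hVα : V ≤ V.comap α := by
    intro x hx
    rw [Subgroup.mem_comap, hmemV]
    intro f hf
    have hcomp : f.comp α ∈ 𝓕 := by
      show IsOpen ((f.comp α).ker : Set G)
      have : ((f.comp α).ker : Set G) = ⇑α ⁻¹' (f.ker : Set G) := by
        rw [← MonoidHom.comap_ker, Subgroup.coe_comap]
      rw [this]
      exact hf.preimage hα
    have := (hmemV x).1 hx (f.comp α) hcomp
    rw [MonoidHom.mem_ker] at this ⊢
    exact this
  -- pass to the finite quotient `G ⧸ V`
  haveI : Finite (G ⧸ V) := V.quotient_finite_of_isOpen hVopen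
  set π := QuotientGroup.mk' V with hπ
  set β := QuotientGroup.map V V α hVα with hβ
  have hcomm : ∀ x : G, β (π x) = π (α x) := by
    intro x
    simp [hβ, hπ, QuotientGroup.map_mk']
  have hcommn : ∀ (n : ℕ) (x : G), (⇑β)^[n] (π x) = π ((⇑α)^[n] x) := by
    intro n
    induction n with
    | zero => intro x; simp
    | succ n ih =>
      intro x
      rw [Function.iterate_succ_apply, hcomm, ih, ← Function.iterate_succ_apply]
  have hπz : π z ∈ ⋂ n : ℕ, Set.range (⇑β)^[n] := by
    rw [Set.mem_iInter]
    intro n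
    obtain ⟨w, hw⟩ := Set.mem_iInter.1 hz n
    exact ⟨π w, by rw [hcommn, hw]⟩
  have hβ1 : β (π z) = 1 := by
    rw [hcomm, hz1, map_one]
  have : π z = 1 := eq_one_of_mem_eventualImage_finite β hπz hβ1
  have hzV : z ∈ V := by
    rwa [← QuotientGroup.eq_one_iff z]
  exact hVN hzV

/-- Let `G` be a topologically finitely generated profinite group and `α : G → G` a
continuous endomorphism.  Then `α` restricts to a bijection of the eventual image
`P = ⋂ₙ αⁿ(G)` onto itself. -/
theorem eventualImage_bijOn_of_profinite (G : Type*) [Group G] [TopologicalSpace G]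
    [IsTopologicalGroup G] [CompactSpace G] [T2Space G] [TotallyDisconnectedSpace G]
    (htfg : ∃ S : Finset G, closure ((Subgroup.closure (S : Set G) : Subgroup G) : Set G)
      = Set.univ)
    (α : G →* G) (hα : Continuous α) :
    Set.BijOn ⇑α (⋂ n : ℕ, Set.range (⇑α)^[n]) (⋂ n : ℕ, Set.range (⇑α)^[n]) := by
  obtain ⟨S, hS⟩ := htfg
  set P := ⋂ n : ℕ, Set.range (⇑α)^[n] with hP
  have hdec : ∀ n : ℕ, Set.range (⇑α)^[n + 1] ⊆ Set.range (⇑α)^[n] := by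
    rintro n x ⟨y, rfl⟩
    exact ⟨α y, (Function.iterate_succ_apply (⇑α) n y).symm⟩
  have hmaps : Set.MapsTo ⇑α P P := by
    intro x hx
    rw [Set.mem_iInter]
    intro n
    obtain ⟨y, rfl⟩ := Set.mem_iInter.1 hx n
    exact ⟨α y, by rw [← Function.iterate_succ_apply, Function.iterate_succ_apply']⟩
  refine ⟨hmaps, ?_, ?_⟩
  · -- injectivity on P
    intro x hx y hy hxy
    have hzP : x * y⁻¹ ∈ P := by
      rw [Set.mem_iInter]
      intro n
      obtain ⟨a, ha⟩ := Set.mem_iInter.1 hx n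
      obtain ⟨b, hb⟩ := Set.mem_iInter.1 hy n
      exact ⟨a * b⁻¹, by rw [iterate_map_mul, iterate_map_inv, ha, hb]⟩
    have hz1 : α (x * y⁻¹) = 1 := by
      rw [map_mul, map_inv, hxy, mul_inv_cancel]
    have hzone : x * y⁻¹ = 1 := by
      by_contra hne
      have h1mem : (1 : G) ∈ ({x * y⁻¹} : Set G)ᶜ := by
        simp only [Set.mem_compl_iff, Set.mem_singleton_iff]
        exact fun h => hne h.symm
      obtain ⟨W, hW, h1W, hWsub⟩ :=
        compact_exists_isClopen_in_isOpen (isOpen_compl_singleton) h1mem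
      obtain ⟨H, hH⟩ :=
        IsTopologicalGroup.exist_openNormalSubgroup_sub_clopen_nhds_of_one hW h1W
      have hmem : x * y⁻¹ ∈ H.toSubgroup :=
        mem_of_openNormal S hS α hα H.toSubgroup H.toOpenSubgroup.isOpen hzP hz1
      exact hWsub (hH hmem) rfl
    have := mul_inv_eq_one.1 hzone
    exact this
  · -- surjectivity onto P
    intro y hy
    set C : ℕ → Set G := fun n => (⇑α ⁻¹' {y}) ∩ Set.range (⇑α)^[n] with hC
    have hclosed : ∀ n, IsClosed (C n) := by
      intro n
      refine (IsClosed.preimage hα isClosed_singleton).inter ?_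
      exact (isCompact_range (hα.iterate n)).isClosed
    have hnonempty : ∀ n, (C n).Nonempty := by
      intro n
      obtain ⟨g, hg⟩ := Set.mem_iInter.1 hy (n + 1)
      refine ⟨(⇑α)^[n] g, ?_, ⟨g, rfl⟩⟩
      simp only [Set.mem_preimage, Set.mem_singleton_iff]
      rw [← Function.iterate_succ_apply' (⇑α) n g, hg]
    have hdecC : ∀ n, C (n + 1) ⊆ C n := by
      intro n
      exact Set.inter_subset_inter_right _ (hdec n)
    have hcomp : IsCompact (C 0) := (hclosed 0).isCompact
    obtain ⟨x, hx⟩ := IsCompact.nonempty_iInter_of_sequence_nonempty_isCompact_isClosed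
      C hdecC hnonempty hcomp hclosed
    rw [Set.mem_iInter] at hx
    have hxP : x ∈ P := by
      rw [Set.mem_iInter]
      intro n
      exact (hx n).2
    have hαx : α x = y := (hx 0).1
    exact ⟨x, hxP, hαx⟩
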